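/- Let F be a finite field and let A be a (γ+1)×(γ+1) superregular matrix over F. Then A is invertible, A⁻¹ is again a lower triangular Toeplitz matrix, and A⁻¹ is superregular. -/

import Mathlib

/-- A square matrix is a lower triangular Toeplitz matrix if its entries below
and on the diagonal depend only on the difference of the indices, determined by
the first column, and the entries above the diagonal vanish. -/
def IsLTToeplitz {F : Type*} [CommRing F] {m : ℕ}
    (A : Matrix (Fin m) (Fin m) F) : Prop :=
  ∃ a : ℕ → F, ∀ r c : Fin m,
    A r c = if (c : ℕ) ≤ (r : ℕ) then a ((r : ℕ) - (c : ℕ)) else 0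

/-- A square matrix is superregular if it is a lower triangular Toeplitz matrix
and every proper submatrix (rows `i₁ < … < iₛ`, columns `j₁ < … < jₛ` with
`jᵥ ≤ iᵥ` for all `ν`) has a nonzero determinant. -/
def Superregular {F : Type*} [CommRing F] {m : ℕ}
    (A : Matrix (Fin m) (Fin m) F) : Prop :=
  IsLTToeplitz A ∧
  ∀ (s : ℕ) (i j : Fin s → Fin m), StrictMono i → StrictMono j →
    (∀ ν : Fin s, (j ν : ℕ) ≤ (i ν : ℕ)) → (A.submatrix i j).det ≠ 0

section SuperregularAux

variable {F : Type*} [Field F]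

noncomputable def toepInv (a : ℕ → F) : ℕ → F
  | 0 => (a 0)⁻¹
  | d+1 => -(a 0)⁻¹ * ∑ t : Fin (d+1), a (d+1-(t:ℕ)) * toepInv a t
  decreasing_by exact t.isLt

lemma toepInv_conv (a : ℕ → F) (ha : a 0 ≠ 0) (d : ℕ) :
    ∑ t ∈ Finset.range (d+1), a (d-t) * toepInv a t = if d = 0 then 1 else 0 := by
  cases d with
  | zero => simp [toepInv, ha]
  | succ e =>
    rw [Finset.sum_range_succ]
    have h1 : ∑ t ∈ Finset.range (e+1), a (e+1-t) * toepInv a t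
        = ∑ t : Fin (e+1), a (e+1-(t:ℕ)) * toepInv a (t:ℕ) :=
      (Fin.sum_univ_eq_sum_range _ _).symm
    simp only [Nat.sub_self, Nat.add_eq_zero, if_neg (by omega : ¬ (e+1 = 0)), Nat.one_ne_zero, and_false, ↓reduceIte]
    rw [h1, toepInv]
    field_simp
    ring

lemma toep_mul_inv {n : ℕ} (A : Matrix (Fin n) (Fin n) F) (a : ℕ → F) (ha : a 0 ≠ 0)
    (hA : ∀ r c : Fin n, A r c = if (c:ℕ) ≤ (r:ℕ) then a ((r:ℕ)-(c:ℕ)) else 0) :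
    A * (Matrix.of fun r c : Fin n =>
      if (c:ℕ) ≤ (r:ℕ) then toepInv a ((r:ℕ)-(c:ℕ)) else 0) = 1 := by
  ext r c
  rw [Matrix.mul_apply]
  have key : ∀ k : Fin n, A r k *
      (Matrix.of fun r c : Fin n =>
        if (c:ℕ) ≤ (r:ℕ) then toepInv a ((r:ℕ)-(c:ℕ)) else 0) k c
      = (fun k : ℕ => if (c:ℕ) ≤ k ∧ k ≤ (r:ℕ)
          then a ((r:ℕ)-k) * toepInv a (k-(c:ℕ)) else 0) (k:ℕ) := by
    intro k
    simp only [hA, Matrix.of_apply]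
    by_cases h1 : (k:ℕ) ≤ (r:ℕ) <;> by_cases h2 : (c:ℕ) ≤ (k:ℕ) <;>
      simp [h1, h2]
  rw [Finset.sum_congr rfl (fun k _ => key k)]
  rw [Fin.sum_univ_eq_sum_range (fun k : ℕ => if (c:ℕ) ≤ k ∧ k ≤ (r:ℕ) then a ((r:ℕ)-k) * toepInv a (k-(c:ℕ)) else 0)]
  rw [← Finset.sum_filter]
  by_cases hrc : (c:ℕ) ≤ (r:ℕ)
  · have hfilt : (Finset.range n).filter (fun k => (c:ℕ) ≤ k ∧ k ≤ (r:ℕ))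
        = Finset.Ico (c:ℕ) ((r:ℕ)+1) := by
      ext k
      simp only [Finset.mem_filter, Finset.mem_range, Finset.mem_Ico]
      have := r.isLt
      omega
    rw [hfilt, Finset.sum_Ico_eq_sum_range]
    have hlen : (r:ℕ) + 1 - (c:ℕ) = ((r:ℕ)-(c:ℕ)) + 1 := by omega
    have hcong : ∀ k ∈ Finset.range (((r:ℕ)-(c:ℕ))+1),
        a ((r:ℕ)-((c:ℕ)+k)) * toepInv a ((c:ℕ)+k-(c:ℕ))
        = a ((r:ℕ)-(c:ℕ)-k) * toepInv a k := by
      intro k hk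
      congr 2 <;> omega
    rw [hlen, Finset.sum_congr rfl hcong, toepInv_conv a ha]
    rw [Matrix.one_apply]
    by_cases heq : r = c
    · simp [heq]
    · have : ¬ ((r:ℕ)-(c:ℕ) = 0) := by
        have : (r:ℕ) ≠ (c:ℕ) := fun h => heq (Fin.ext h)
        omega
      simp [this, heq]
  · have : (Finset.range n).filter (fun k => (c:ℕ) ≤ k ∧ k ≤ (r:ℕ)) = ∅ := by
      ext k; simp only [Finset.mem_filter, Finset.mem_range, Finset.notMem_empty, iff_false]
      omega
    rw [this, Finset.sum_empty, Matrix.one_apply]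
    have : r ≠ c := by rintro rfl; exact hrc le_rfl
    simp [this]

lemma image_orderEmbOfFin {α : Type*} [LinearOrder α] [DecidableEq α] (X : Finset α) {k : ℕ} (h : X.card = k) :
    Finset.univ.image (X.orderEmbOfFin h) = X := by
  apply Finset.eq_of_subset_of_card_le
  · intro a ha
    obtain ⟨ν, _, rfl⟩ := Finset.mem_image.mp ha
    exact X.orderEmbOfFin_mem h ν
  · rw [h, Finset.card_image_of_injective _ (X.orderEmbOfFin h).injective,
      Finset.card_univ, Fintype.card_fin]

lemma count_filter_image {n s : ℕ} {x : Fin s → Fin n} (hx : Function.Injective x)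
    {X : Finset (Fin n)} (hX : Finset.univ.image x = X) (t : ℕ) :
    (X.filter (fun a : Fin n => (a:ℕ) < t)).card
      = (Finset.univ.filter (fun ν : Fin s => (x ν : ℕ) < t)).card := by
  subst hX
  rw [Finset.filter_image]
  exact Finset.card_image_of_injective _ hx

lemma count_compl {n : ℕ} (X : Finset (Fin n)) (t : ℕ) :
    ((Xᶜ).filter (fun a : Fin n => (a:ℕ) < t)).card + (X.filter (fun a : Fin n => (a:ℕ) < t)).card
      = (Finset.univ.filter (fun a : Fin n => (a:ℕ) < t)).card := by
  rw [← Finset.card_union_of_disjoint (Finset.disjoint_filter_filter disjoint_compl_left),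
      ← Finset.filter_union]
  congr 1
  rw [← Finset.sup_eq_union, compl_sup_eq_top, Finset.top_eq_univ]

lemma pointwise_of_counts {n u : ℕ} {x y : Fin u → Fin n} (hx : StrictMono x) (hy : Monotone y)
    (h : ∀ t : ℕ, (Finset.univ.filter (fun κ : Fin u => (y κ : ℕ) < t)).card
        ≤ (Finset.univ.filter (fun κ : Fin u => (x κ : ℕ) < t)).card) :
    ∀ μ, (x μ : ℕ) ≤ (y μ : ℕ) := by
  intro μ
  by_contra hlt
  push_neg at hlt
  set t := (y μ : ℕ) + 1 with ht
  have h1 : Finset.Iic μ ⊆ Finset.univ.filter (fun κ => (y κ : ℕ) < t) := by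
    intro κ hκ
    simp only [Finset.mem_filter, Finset.mem_univ, true_and]
    have := hy (Finset.mem_Iic.mp hκ)
    rw [Fin.le_def] at this
    omega
  have h2 : (μ : ℕ) + 1 ≤ (Finset.univ.filter (fun κ : Fin u => (y κ : ℕ) < t)).card := by
    have := Finset.card_le_card h1
    rwa [Fin.card_Iic] at this
  have h3 : (Finset.univ.filter (fun κ : Fin u => (x κ : ℕ) < t)).card ≤ (μ : ℕ) := by
    have hsub : Finset.univ.filter (fun κ : Fin u => (x κ : ℕ) < t) ⊆ Finset.Iio μ := by
      intro κ hκ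
      simp only [Finset.mem_filter, Finset.mem_univ, true_and] at hκ
      rw [Finset.mem_Iio, ← hx.lt_iff_lt, Fin.lt_def]
      omega
    have := Finset.card_le_card hsub
    rwa [Fin.card_Iio] at this
  have := h t
  omega

lemma compl_pointwise_le {n s : ℕ} {i j : Fin s → Fin n} (hi : StrictMono i) (hj : StrictMono j)
    (hle : ∀ ν, (j ν : ℕ) ≤ (i ν : ℕ))
    {u : ℕ} (hci : ((Finset.univ.image i)ᶜ : Finset (Fin n)).card = u)
    (hcj : ((Finset.univ.image j)ᶜ : Finset (Fin n)).card = u) :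
    ∀ μ : Fin u, ((((Finset.univ.image i)ᶜ).orderEmbOfFin hci) μ : ℕ)
        ≤ ((((Finset.univ.image j)ᶜ).orderEmbOfFin hcj) μ : ℕ) := by
  set I : Finset (Fin n) := Finset.univ.image i with hI
  set J : Finset (Fin n) := Finset.univ.image j with hJ
  apply pointwise_of_counts ((Iᶜ).orderEmbOfFin hci).strictMono
    ((Jᶜ).orderEmbOfFin hcj).monotone
  intro t
  rw [← count_filter_image ((Jᶜ).orderEmbOfFin hcj).injective (image_orderEmbOfFin _ hcj) t,
      ← count_filter_image ((Iᶜ).orderEmbOfFin hci).injective (image_orderEmbOfFin _ hci) t]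
  have hIJ : (I.filter (fun a : Fin n => (a:ℕ) < t)).card ≤ (J.filter (fun a : Fin n => (a:ℕ) < t)).card := by
    rw [count_filter_image hi.injective hI.symm t, count_filter_image hj.injective hJ.symm t]
    apply Finset.card_le_card
    intro ν hν
    simp only [Finset.mem_filter, Finset.mem_univ, true_and] at hν ⊢
    exact lt_of_le_of_lt (hle ν) hν
  have e1 := count_compl I t
  have e2 := count_compl J t
  omega

lemma submatrix_sum_elim {n s t : ℕ} (M : Matrix (Fin n) (Fin n) F)
    (i : Fin s → Fin n) (i' : Fin t → Fin n) (j : Fin s → Fin n) (j' : Fin t → Fin n) :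
    M.submatrix (Sum.elim i i') (Sum.elim j j')
      = Matrix.fromBlocks (M.submatrix i j) (M.submatrix i j')
          (M.submatrix i' j) (M.submatrix i' j') := by
  ext r c
  cases r <;> cases c <;> rfl

lemma jacobi_ne_zero {n s t : ℕ} (A : Matrix (Fin n) (Fin n) F) (hdet : IsUnit A.det)
    (i j : Fin s → Fin n) (i' j' : Fin t → Fin n)
    (e f : Fin s ⊕ Fin t ≃ Fin n)
    (he : ⇑e = Sum.elim i i') (hf : ⇑f = Sum.elim j j')
    (h : (A.submatrix j' i').det ≠ 0) :
    ((A⁻¹).submatrix i j).det ≠ 0 := by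
  have hAB : A * A⁻¹ = 1 := Matrix.mul_nonsing_inv A hdet
  have hAB' : (A.submatrix ⇑f ⇑e) * ((A⁻¹).submatrix ⇑e ⇑f) = 1 := by
    rw [Matrix.submatrix_mul_equiv, hAB, Matrix.submatrix_one_equiv]
  rw [he, hf, submatrix_sum_elim, submatrix_sum_elim, Matrix.fromBlocks_multiply] at hAB'
  rw [show (1 : Matrix (Fin s ⊕ Fin t) (Fin s ⊕ Fin t) F) = Matrix.fromBlocks 1 0 0 1 from
    (Matrix.fromBlocks_one).symm] at hAB'
  have h11 : A.submatrix j i * (A⁻¹).submatrix i j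
      + A.submatrix j i' * (A⁻¹).submatrix i' j = 1 := by
    have := congrArg Matrix.toBlocks₁₁ hAB'
    simpa only [Matrix.toBlocks_fromBlocks₁₁] using this
  have h21 : A.submatrix j' i * (A⁻¹).submatrix i j
      + A.submatrix j' i' * (A⁻¹).submatrix i' j = 0 := by
    have := congrArg Matrix.toBlocks₂₁ hAB'
    simpa only [Matrix.toBlocks_fromBlocks₂₁] using this
  set A' : Matrix (Fin s ⊕ Fin t) (Fin s ⊕ Fin t) F :=
    Matrix.fromBlocks (A.submatrix j i) (A.submatrix j i')
      (A.submatrix j' i) (A.submatrix j' i') with hA'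
  set C₀ : Matrix (Fin s ⊕ Fin t) (Fin s ⊕ Fin t) F :=
    Matrix.fromBlocks ((A⁻¹).submatrix i j) 0 ((A⁻¹).submatrix i' j) 1 with hC₀
  have hmul : A' * C₀ = Matrix.fromBlocks 1 (A.submatrix j i') 0 (A.submatrix j' i') := by
    rw [hA', hC₀, Matrix.fromBlocks_multiply]
    simp [h11, h21]
  have hdeteq : A'.det * ((A⁻¹).submatrix i j).det = (A.submatrix j' i').det := by
    have d1 : (A' * C₀).det = (A.submatrix j' i').det := by
      rw [hmul, Matrix.det_fromBlocks_zero₂₁, Matrix.det_one, one_mul]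
    have d2 : C₀.det = ((A⁻¹).submatrix i j).det := by
      rw [hC₀, Matrix.det_fromBlocks_zero₁₂, Matrix.det_one, mul_one]
    rw [← d1, Matrix.det_mul, d2]
  intro h0
  rw [h0, mul_zero] at hdeteq
  exact h hdeteq.symm

lemma elim_bijective {n s u : ℕ} {i : Fin s → Fin n} (hi : Function.Injective i)
    (hci : ((Finset.univ.image i)ᶜ : Finset (Fin n)).card = u) (hu : s + u = n) :
    Function.Bijective (Sum.elim i ⇑(((Finset.univ.image i)ᶜ).orderEmbOfFin hci)) := by
  rw [Fintype.bijective_iff_injective_and_card]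
  constructor
  · rintro (x|x) (y|y) h <;> simp only [Sum.elim_inl, Sum.elim_inr] at h
    · exact congrArg Sum.inl (hi h)
    · exfalso
      have h1 : i x ∈ Finset.univ.image i := Finset.mem_image_of_mem i (Finset.mem_univ x)
      have h2 := ((Finset.univ.image i)ᶜ).orderEmbOfFin_mem hci y
      rw [← h] at h2
      exact (Finset.mem_compl.mp h2) h1
    · exfalso
      have h1 : i y ∈ Finset.univ.image i := Finset.mem_image_of_mem i (Finset.mem_univ y)
      have h2 := ((Finset.univ.image i)ᶜ).orderEmbOfFin_mem hci x
      rw [h] at h2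
      exact (Finset.mem_compl.mp h2) h1
    · exact congrArg Sum.inr ((((Finset.univ.image i)ᶜ).orderEmbOfFin hci).injective h)
  · simp [hu]

end SuperregularAux

/-- The inverse of a superregular matrix is again a (lower triangular Toeplitz)
superregular matrix. -/
theorem superregular_inv {F : Type*} [Field F] [Fintype F] {γ : ℕ}
    (A : Matrix (Fin (γ + 1)) (Fin (γ + 1)) F) (hA : Superregular A) :
    IsUnit A ∧ IsLTToeplitz A⁻¹ ∧ Superregular A⁻¹ := by
  obtain ⟨⟨a, ha⟩, hmin⟩ := hA
  have smono1 : StrictMono (fun _ : Fin 1 => (0 : Fin (γ+1))) := by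
    intro x y hxy
    exact absurd (Subsingleton.elim x y) (ne_of_lt hxy)
  have ha0 : a 0 ≠ 0 := by
    have h1 := hmin 1 (fun _ => (0 : Fin (γ+1))) (fun _ => 0) smono1 smono1 (fun _ => le_rfl)
    rw [Matrix.det_fin_one] at h1
    simpa [Matrix.submatrix_apply, ha] using h1
  have hmul := toep_mul_inv A a ha0 ha
  have hdet : IsUnit A.det := Matrix.isUnit_det_of_right_inverse hmul
  have hunit : IsUnit A := (Matrix.isUnit_iff_isUnit_det A).mpr hdet
  have hInv : A⁻¹ = Matrix.of fun r c : Fin (γ+1) =>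
      if (c:ℕ) ≤ (r:ℕ) then toepInv a ((r:ℕ)-(c:ℕ)) else 0 := Matrix.inv_eq_right_inv hmul
  have hT : IsLTToeplitz A⁻¹ := ⟨toepInv a, fun r c => by rw [hInv]; rfl⟩
  refine ⟨hunit, hT, hT, ?_⟩
  intro s i j hi hj hle
  have hs : s ≤ γ + 1 := by
    have := Fintype.card_le_of_injective i hi.injective
    simpa using this
  have hIcard : (Finset.univ.image i : Finset (Fin (γ+1))).card = s := by
    rw [Finset.card_image_of_injective _ hi.injective, Finset.card_univ, Fintype.card_fin]
  have hJcard : (Finset.univ.image j : Finset (Fin (γ+1))).card = s := by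
    rw [Finset.card_image_of_injective _ hj.injective, Finset.card_univ, Fintype.card_fin]
  have hci : ((Finset.univ.image i)ᶜ : Finset (Fin (γ+1))).card = γ + 1 - s := by
    rw [Finset.card_compl, hIcard, Fintype.card_fin]
  have hcj : ((Finset.univ.image j)ᶜ : Finset (Fin (γ+1))).card = γ + 1 - s := by
    rw [Finset.card_compl, hJcard, Fintype.card_fin]
  have hu : s + (γ + 1 - s) = γ + 1 := by omega
  set i' := ((Finset.univ.image i)ᶜ : Finset (Fin (γ+1))).orderEmbOfFin hci with hi'
  set j' := ((Finset.univ.image j)ᶜ : Finset (Fin (γ+1))).orderEmbOfFin hcj with hj'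
  have hproper : ∀ μ : Fin (γ + 1 - s), ((i' μ : ℕ)) ≤ (j' μ : ℕ) :=
    compl_pointwise_le hi hj hle hci hcj
  have hsub : (A.submatrix ⇑j' ⇑i').det ≠ 0 :=
    hmin (γ + 1 - s) ⇑j' ⇑i' j'.strictMono i'.strictMono hproper
  exact jacobi_ne_zero A hdet i j ⇑i' ⇑j'
    (Equiv.ofBijective _ (elim_bijective hi.injective hci hu))
    (Equiv.ofBijective _ (elim_bijective hj.injective hcj hu)) rfl rfl hsub
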